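/- Let d, n ≥ 1 be integers, λ > 0 a real number, and θ⋆ ∈ ℝ^d. For each k ∈ {1,…,n} let A_k ∈ ℝ^d and γ_k, Δ_k ∈ ℝ, and set Y_k = ⟨A_k, θ⋆⟩ + γ_k + Δ_k. Define V = λ I_d + Σ_{t=1}^n A_t A_tᵀ (a positive definite, hence invertible, matrix), θ̂ = V⁻¹ Σ_{t=1}^n A_t Y_t, and ι = Σ_{t=1}^n A_t γ_t. Then ‖θ̂ − θ⋆‖_V ≤ √λ · ‖θ⋆‖₂ + (max_{k∈[n]} |Δ_k|) · √n + ‖ι‖_{V⁻¹}. -/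

import Mathlib

open Matrix Finset

/-- Euclidean norm of a vector in `ℝ^d`. -/
noncomputable def euclNorm {d : ℕ} (x : Fin d → ℝ) : ℝ := Real.sqrt (x ⬝ᵥ x)

/-- Norm weighted by a (positive semidefinite) matrix `M`: `‖x‖_M = √(xᵀ M x)`. -/
noncomputable def mnorm {d : ℕ} (M : Matrix (Fin d) (Fin d) ℝ) (x : Fin d → ℝ) : ℝ :=
  Real.sqrt (x ⬝ᵥ M.mulVec x)

lemma dot_self_nonneg' {d : ℕ} (x : Fin d → ℝ) : 0 ≤ x ⬝ᵥ x :=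
  Finset.sum_nonneg fun i _ => mul_self_nonneg _

lemma cs_dot {d : ℕ} (x y : Fin d → ℝ) :
    x ⬝ᵥ y ≤ Real.sqrt (x ⬝ᵥ x) * Real.sqrt (y ⬝ᵥ y) := by
  have h := Finset.sum_mul_sq_le_sq_mul_sq Finset.univ x y
  have e1 : x ⬝ᵥ x = ∑ i, x i ^ 2 := by simp [dotProduct, sq]
  have e2 : y ⬝ᵥ y = ∑ i, y i ^ 2 := by simp [dotProduct, sq]
  have h2 : (x ⬝ᵥ y) ^ 2 ≤ (x ⬝ᵥ x) * (y ⬝ᵥ y) := by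
    rw [e1, e2]; exact h
  calc x ⬝ᵥ y ≤ |x ⬝ᵥ y| := le_abs_self _
    _ = Real.sqrt ((x ⬝ᵥ y) ^ 2) := (Real.sqrt_sq_eq_abs _).symm
    _ ≤ Real.sqrt ((x ⬝ᵥ x) * (y ⬝ᵥ y)) := Real.sqrt_le_sqrt h2
    _ = _ := Real.sqrt_mul (dot_self_nonneg' x) _

lemma sum_mulVec' {k d : ℕ} (N : Fin k → Matrix (Fin d) (Fin d) ℝ) (x : Fin d → ℝ) :
    (∑ t, N t) *ᵥ x = ∑ t, N t *ᵥ x := by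
  ext i
  simp only [Matrix.mulVec, dotProduct, Matrix.sum_apply, Finset.sum_apply,
    Finset.sum_mul]
  exact Finset.sum_comm

lemma dotProduct_sum' {k d : ℕ} (x : Fin d → ℝ) (f : Fin k → Fin d → ℝ) :
    x ⬝ᵥ (∑ t, f t) = ∑ t, x ⬝ᵥ f t := by
  simp only [dotProduct, Finset.sum_apply, Finset.mul_sum]
  exact Finset.sum_comm

lemma sum_dotProduct' {k d : ℕ} (x : Fin d → ℝ) (f : Fin k → Fin d → ℝ) :
    (∑ t, f t) ⬝ᵥ x = ∑ t, f t ⬝ᵥ x := by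
  simp only [dotProduct, Finset.sum_apply, Finset.sum_mul]
  exact Finset.sum_comm

lemma dot_mulVec_le {d : ℕ} {M : Matrix (Fin d) (Fin d) ℝ} (hM : M.PosSemidef)
    (x y : Fin d → ℝ) : x ⬝ᵥ M *ᵥ y ≤ mnorm M x * mnorm M y := by
  obtain ⟨B, hB⟩ : ∃ B : Matrix (Fin d) (Fin d) ℝ, M = Bᴴ * B := by
    classical
    open scoped MatrixOrder in
    obtain ⟨B, hB⟩ := CStarAlgebra.nonneg_iff_eq_star_mul_self.mp hM.nonneg
    exact ⟨B, by rw [hB, Matrix.star_eq_conjTranspose]⟩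
  have key : ∀ u v : Fin d → ℝ, u ⬝ᵥ M *ᵥ v = (B *ᵥ u) ⬝ᵥ (B *ᵥ v) := by
    intro u v
    rw [hB, Matrix.conjTranspose_eq_transpose_of_trivial, ← Matrix.mulVec_mulVec,
      Matrix.dotProduct_mulVec, Matrix.vecMul_transpose]
  have h1 : mnorm M x = Real.sqrt ((B *ᵥ x) ⬝ᵥ (B *ᵥ x)) := by rw [mnorm, key]
  have h2 : mnorm M y = Real.sqrt ((B *ᵥ y) ⬝ᵥ (B *ᵥ y)) := by rw [mnorm, key]
  rw [key, h1, h2]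
  exact cs_dot _ _

lemma mnorm_add_le {d : ℕ} {M : Matrix (Fin d) (Fin d) ℝ} (hM : M.PosSemidef)
    (x y : Fin d → ℝ) : mnorm M (x + y) ≤ mnorm M x + mnorm M y := by
  have hxy : (x + y) ⬝ᵥ M *ᵥ (x + y)
      = x ⬝ᵥ M *ᵥ x + x ⬝ᵥ M *ᵥ y + (y ⬝ᵥ M *ᵥ x + y ⬝ᵥ M *ᵥ y) := by
    rw [Matrix.mulVec_add, add_dotProduct, dotProduct_add, dotProduct_add]
  have hx : 0 ≤ mnorm M x := Real.sqrt_nonneg _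
  have hy : 0 ≤ mnorm M y := Real.sqrt_nonneg _
  have hsx : x ⬝ᵥ M *ᵥ x = mnorm M x ^ 2 := by
    rw [mnorm, Real.sq_sqrt]; simpa using hM.dotProduct_mulVec_nonneg x
  have hsy : y ⬝ᵥ M *ᵥ y = mnorm M y ^ 2 := by
    rw [mnorm, Real.sq_sqrt]; simpa using hM.dotProduct_mulVec_nonneg y
  have c1 : x ⬝ᵥ M *ᵥ y ≤ mnorm M x * mnorm M y := dot_mulVec_le hM x y
  have c2 : y ⬝ᵥ M *ᵥ x ≤ mnorm M y * mnorm M x := dot_mulVec_le hM y x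
  have hle : (x + y) ⬝ᵥ M *ᵥ (x + y) ≤ (mnorm M x + mnorm M y) ^ 2 := by
    rw [hxy, hsx, hsy]; ring_nf; nlinarith
  calc mnorm M (x + y) = Real.sqrt ((x + y) ⬝ᵥ M *ᵥ (x + y)) := rfl
    _ ≤ Real.sqrt ((mnorm M x + mnorm M y) ^ 2) := Real.sqrt_le_sqrt hle
    _ = mnorm M x + mnorm M y := Real.sqrt_sq (by positivity)

lemma mnorm_smul' {d : ℕ} (M : Matrix (Fin d) (Fin d) ℝ) (c : ℝ) (x : Fin d → ℝ) :
    mnorm M (c • x) = |c| * mnorm M x := by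
  have : (c • x) ⬝ᵥ M *ᵥ (c • x) = c ^ 2 * (x ⬝ᵥ M *ᵥ x) := by
    rw [Matrix.mulVec_smul, dotProduct_smul, smul_dotProduct]
    simp [smul_eq_mul]; ring
  rw [mnorm, this, Real.sqrt_mul (sq_nonneg c), Real.sqrt_sq_eq_abs, mnorm]

set_option maxHeartbeats 1000000 in
/-- Least-squares error decomposition (Lemma: Least-squares Error Decomposition). -/
theorem least_squares_error_decomposition
    {d n : ℕ} (hd : 1 ≤ d) (hn : 1 ≤ n)
    (lam : ℝ) (hlam : 0 < lam)
    (θstar : Fin d → ℝ) (A : Fin n → Fin d → ℝ) (γ Δ : Fin n → ℝ)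
    (Y : Fin n → ℝ) (hY : ∀ k, Y k = A k ⬝ᵥ θstar + γ k + Δ k)
    (V : Matrix (Fin d) (Fin d) ℝ)
    (hV : V = lam • (1 : Matrix (Fin d) (Fin d) ℝ) + ∑ t, vecMulVec (A t) (A t))
    (θhat : Fin d → ℝ) (hθhat : θhat = V⁻¹.mulVec (∑ t, Y t • A t))
    (ι : Fin d → ℝ) (hι : ι = ∑ t, γ t • A t) :
    mnorm V (θhat - θstar) ≤
      Real.sqrt lam * euclNorm θstar
        + (Finset.univ.sup' (Finset.univ_nonempty_iff.mpr ⟨⟨0, hn⟩⟩) fun k => |Δ k|)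
            * Real.sqrt n
        + mnorm V⁻¹ ι := by
  set m : ℝ := Finset.univ.sup' (Finset.univ_nonempty_iff.mpr ⟨⟨0, hn⟩⟩) fun k => |Δ k| with hm
  have hm_ge : ∀ k, |Δ k| ≤ m := by
    intro k; rw [hm]; exact Finset.le_sup' (fun k => |Δ k|) (Finset.mem_univ k)
  have hm0 : 0 ≤ m := le_trans (abs_nonneg _) (hm_ge ⟨0, hn⟩)
  -- vecMulVec action
  have hvmv : ∀ (a x : Fin d → ℝ), (vecMulVec a a) *ᵥ x = (a ⬝ᵥ x) • a := by
    intro a x; ext i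
    simp only [Matrix.mulVec, dotProduct, Matrix.vecMulVec_apply, Pi.smul_apply,
      smul_eq_mul, Finset.sum_mul]
    exact Finset.sum_congr rfl fun j _ => by ring
  have hmul : ∀ x : Fin d → ℝ, V *ᵥ x = lam • x + ∑ t, (A t ⬝ᵥ x) • A t := by
    intro x
    rw [hV, Matrix.add_mulVec, Matrix.smul_mulVec, Matrix.one_mulVec, sum_mulVec']
    congr 1
    exact Finset.sum_congr rfl fun t _ => hvmv (A t) x
  have quadV : ∀ x : Fin d → ℝ, x ⬝ᵥ V *ᵥ x = lam * (x ⬝ᵥ x) + ∑ t, (A t ⬝ᵥ x) ^ 2 := by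
    intro x
    rw [hmul, dotProduct_add, dotProduct_smul, dotProduct_sum' x]
    simp only [dotProduct_smul, smul_eq_mul]
    congr 1
    exact Finset.sum_congr rfl fun t _ => by rw [dotProduct_comm, sq]
  -- positive definiteness
  have hVpd : V.PosDef := by
    refine Matrix.PosDef.of_dotProduct_mulVec_pos ?_ ?_
    · rw [hV]
      show _ᴴ = _
      rw [Matrix.conjTranspose_eq_transpose_of_trivial]
      ext i j
      simp only [Matrix.transpose_apply, Matrix.add_apply, Matrix.smul_apply, Matrix.one_apply,
        Matrix.sum_apply, Matrix.vecMulVec_apply, smul_eq_mul]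
      by_cases h : i = j
      · subst h; rfl
      · simp [h, Ne.symm h, mul_comm]
    · intro x hx
      have hxx : 0 < x ⬝ᵥ x := by
        obtain ⟨i, hi⟩ := Function.ne_iff.mp hx
        exact Finset.sum_pos' (fun j _ => mul_self_nonneg _)
          ⟨i, Finset.mem_univ i, mul_self_pos.mpr hi⟩
      have := quadV x
      simp only [star_trivial]
      rw [quadV x]
      have h2 : 0 ≤ ∑ t, (A t ⬝ᵥ x) ^ 2 := Finset.sum_nonneg fun t _ => sq_nonneg _
      nlinarith
  have hdet : IsUnit V.det := hVpd.det_pos.ne'.isUnit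
  have hVVinv : ∀ y : Fin d → ℝ, V *ᵥ (V⁻¹ *ᵥ y) = y := by
    intro y; rw [Matrix.mulVec_mulVec, Matrix.mul_nonsing_inv _ hdet, Matrix.one_mulVec]
  have hVinvV : ∀ y : Fin d → ℝ, V⁻¹ *ᵥ (V *ᵥ y) = y := by
    intro y; rw [Matrix.mulVec_mulVec, Matrix.nonsing_inv_mul _ hdet, Matrix.one_mulVec]
  have hVinvPSD : (V⁻¹).PosSemidef := hVpd.inv.posSemidef
  set w : Fin d → ℝ := ∑ t, Δ t • A t with hw
  set u : Fin d → ℝ := (-lam) • θstar + ι + w with hu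
  have hVe : V *ᵥ (θhat - θstar) = u := by
    have h1 : V *ᵥ θhat = ∑ t, Y t • A t := by rw [hθhat]; exact hVVinv _
    have hsum : ∑ t, Y t • A t = (∑ t, (A t ⬝ᵥ θstar) • A t) + ι + w := by
      rw [hι, hw, ← Finset.sum_add_distrib, ← Finset.sum_add_distrib]
      exact Finset.sum_congr rfl fun t _ => by rw [hY t, add_smul, add_smul]
    rw [Matrix.mulVec_sub, h1, hsum, hmul θstar, hu]
    ext i; simp; ring
  have he : θhat - θstar = V⁻¹ *ᵥ u := by rw [← hVe, hVinvV]
  have hmain : mnorm V (θhat - θstar) = mnorm V⁻¹ u := by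
    rw [mnorm, mnorm, hVe, he, dotProduct_comm]
  -- triangle inequality
  have tri : mnorm V⁻¹ u ≤ mnorm V⁻¹ ((-lam) • θstar) + mnorm V⁻¹ ι + mnorm V⁻¹ w := by
    calc mnorm V⁻¹ u ≤ mnorm V⁻¹ ((-lam) • θstar + ι) + mnorm V⁻¹ w :=
          mnorm_add_le hVinvPSD _ _
      _ ≤ mnorm V⁻¹ ((-lam) • θstar) + mnorm V⁻¹ ι + mnorm V⁻¹ w := by
          have := mnorm_add_le hVinvPSD ((-lam) • θstar) ι
          linarith
  have hsmul : mnorm V⁻¹ ((-lam) • θstar) = lam * mnorm V⁻¹ θstar := by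
    rw [mnorm_smul', abs_neg, abs_of_pos hlam]
  -- bound 1 : lam * mnorm V⁻¹ θstar ≤ √lam * euclNorm θstar
  have bound1 : lam * mnorm V⁻¹ θstar ≤ Real.sqrt lam * euclNorm θstar := by
    set z : Fin d → ℝ := V⁻¹ *ᵥ θstar with hz
    have hVz : V *ᵥ z = θstar := hVVinv _
    set s : ℝ := θstar ⬝ᵥ z with hs
    have hq : z ⬝ᵥ V *ᵥ z = lam * (z ⬝ᵥ z) + ∑ t, (A t ⬝ᵥ z) ^ 2 := quadV z
    have hq2 : z ⬝ᵥ V *ᵥ z = s := by rw [hVz, dotProduct_comm]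
    have h1 : lam * (z ⬝ᵥ z) ≤ s := by
      have h2 : 0 ≤ ∑ t, (A t ⬝ᵥ z) ^ 2 := Finset.sum_nonneg fun t _ => sq_nonneg _
      linarith [hq.symm.trans hq2]
    set a : ℝ := Real.sqrt (z ⬝ᵥ z) with ha
    set b : ℝ := Real.sqrt (θstar ⬝ᵥ θstar) with hb
    have ha2 : a ^ 2 = z ⬝ᵥ z := Real.sq_sqrt (dot_self_nonneg' z)
    have hb2 : b ^ 2 = θstar ⬝ᵥ θstar := Real.sq_sqrt (dot_self_nonneg' θstar)
    have hcs : s ≤ b * a := cs_dot θstar z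
    have ha0 : 0 ≤ a := Real.sqrt_nonneg _
    have hb0 : 0 ≤ b := Real.sqrt_nonneg _
    have hs0 : 0 ≤ s := le_trans (by positivity) (ha2 ▸ h1 : lam * a ^ 2 ≤ s)
    have key : lam * s ≤ b ^ 2 := by
      have P1 : lam * s ≤ lam * (b * a) := mul_le_mul_of_nonneg_left hcs hlam.le
      have P2 : lam * (lam * a ^ 2) ≤ lam * s :=
        mul_le_mul_of_nonneg_left (ha2 ▸ h1) hlam.le
      nlinarith [sq_nonneg (lam * a - b)]
    have hmn : mnorm V⁻¹ θstar = Real.sqrt s := by rw [mnorm, ← hz, ← hs]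
    rw [hmn]
    have e1 : lam * Real.sqrt s = Real.sqrt (lam ^ 2 * s) := by
      rw [Real.sqrt_mul (sq_nonneg lam), Real.sqrt_sq hlam.le]
    have e2 : Real.sqrt lam * euclNorm θstar = Real.sqrt (lam * (θstar ⬝ᵥ θstar)) := by
      rw [euclNorm, ← Real.sqrt_mul hlam.le]
    rw [e1, e2]
    apply Real.sqrt_le_sqrt
    have : lam * (lam * s) ≤ lam * b ^ 2 := mul_le_mul_of_nonneg_left key hlam.le
    rw [hb2] at this
    nlinarith
  -- bound 2 : mnorm V⁻¹ w ≤ m * √n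
  have bound2 : mnorm V⁻¹ w ≤ m * Real.sqrt n := by
    set z : Fin d → ℝ := V⁻¹ *ᵥ w with hz
    have hVz : V *ᵥ z = w := hVVinv _
    set s : ℝ := w ⬝ᵥ z with hs
    have hq : z ⬝ᵥ V *ᵥ z = lam * (z ⬝ᵥ z) + ∑ t, (A t ⬝ᵥ z) ^ 2 := quadV z
    have hq2 : z ⬝ᵥ V *ᵥ z = s := by rw [hVz, dotProduct_comm]
    have hcsum : ∑ t, (A t ⬝ᵥ z) ^ 2 ≤ s := by
      have : 0 ≤ lam * (z ⬝ᵥ z) := mul_nonneg hlam.le (dot_self_nonneg' z)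
      linarith [hq.symm.trans hq2]
    have hs0 : 0 ≤ s := by
      have h2 : 0 ≤ ∑ t, (A t ⬝ᵥ z) ^ 2 := Finset.sum_nonneg fun t _ => sq_nonneg _
      have : 0 ≤ lam * (z ⬝ᵥ z) := mul_nonneg hlam.le (dot_self_nonneg' z)
      linarith [hq.symm.trans hq2]
    have hrep : s = ∑ t, Δ t * (A t ⬝ᵥ z) := by
      rw [hs, hw, sum_dotProduct']
      exact Finset.sum_congr rfl fun t _ => by
        rw [smul_dotProduct, smul_eq_mul, dotProduct_comm]
    have hΔsum : ∑ t, (Δ t) ^ 2 ≤ (n : ℝ) * m ^ 2 := by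
      calc ∑ t, (Δ t) ^ 2 ≤ ∑ _t : Fin n, m ^ 2 := by
            apply Finset.sum_le_sum
            intro t _
            have h := abs_le.mp (hm_ge t)
            nlinarith [h.1, h.2]
        _ = (n : ℝ) * m ^ 2 := by simp [Finset.sum_const, mul_comm]
    have hcs : s ^ 2 ≤ ((n : ℝ) * m ^ 2) * s := by
      have h := Finset.sum_mul_sq_le_sq_mul_sq Finset.univ Δ (fun t => A t ⬝ᵥ z)
      calc s ^ 2 = (∑ t, Δ t * (A t ⬝ᵥ z)) ^ 2 := by rw [hrep]
        _ ≤ (∑ t, (Δ t) ^ 2) * ∑ t, (A t ⬝ᵥ z) ^ 2 := h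
        _ ≤ ((n : ℝ) * m ^ 2) * s := by
            apply mul_le_mul hΔsum hcsum (Finset.sum_nonneg fun t _ => sq_nonneg _)
            positivity
    have hK : (0 : ℝ) ≤ (n : ℝ) * m ^ 2 := by positivity
    have hsle : s ≤ (n : ℝ) * m ^ 2 := by
      rcases eq_or_lt_of_le hs0 with h0 | h0
      · rw [← h0]; exact hK
      · refine le_of_mul_le_mul_right ?_ h0
        rw [sq] at hcs; exact hcs
    have hmn : mnorm V⁻¹ w = Real.sqrt s := by rw [mnorm, ← hz, ← hs]
    rw [hmn]
    calc Real.sqrt s ≤ Real.sqrt ((n : ℝ) * m ^ 2) := Real.sqrt_le_sqrt hsle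
      _ = m * Real.sqrt n := by
          rw [Real.sqrt_mul (Nat.cast_nonneg n), Real.sqrt_sq hm0, mul_comm]
  -- combine
  have hue : θhat - θstar = θhat - θstar := rfl
  rw [hmain]
  have := tri
  rw [hsmul] at this
  linarith
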